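/- There exists an ergodic semigroup (Φⁿ) of linear positive unital trace-preserving maps on M₂(ℂ) whose point spectrum (set of modulus-one eigenvalues) is not a group under multiplication. -/

import Mathlib

open ComplexOrder Matrix

noncomputable def Amat : Matrix (Fin 2) (Fin 2) ℂ := !![1, 0; 0, Complex.I]
noncomputable def Bmat : Matrix (Fin 2) (Fin 2) ℂ := !![0, 1; Complex.I, 0]

noncomputable def Phi : Matrix (Fin 2) (Fin 2) ℂ →ₗ[ℂ] Matrix (Fin 2) (Fin 2) ℂ where
  toFun x := (2⁻¹ : ℂ) • (Amat * x * Amatᴴ + Bmat * xᵀ * Bmatᴴ)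
  map_add' x y := by
    simp only [Matrix.transpose_add, Matrix.mul_add, Matrix.add_mul, smul_add]
    abel
  map_smul' c x := by
    simp only [Matrix.transpose_smul, Matrix.mul_smul, Matrix.smul_mul, smul_add,
      RingHom.id_apply]
    rw [smul_comm, smul_comm (2⁻¹:ℂ) c]

lemma Phi_apply (x : Matrix (Fin 2) (Fin 2) ℂ) :
    Phi x = !![(x 0 0 + x 1 1) / 2, -Complex.I * x 0 1;
               Complex.I * x 1 0, (x 0 0 + x 1 1) / 2] := by
  ext i j
  fin_cases i <;> fin_cases j <;>
    · simp [Phi, Amat, Bmat, Matrix.mul_apply, Matrix.vecMul, dotProduct,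
        Fin.sum_univ_two, Matrix.conjTranspose_apply, Matrix.transpose_apply]
      ring_nf
      all_goals simp [Complex.I_sq]
      all_goals ring_nf

lemma posSemidef_half {M : Matrix (Fin 2) (Fin 2) ℂ} (h : M.PosSemidef) :
    ((2⁻¹ : ℂ) • M).PosSemidef := by
  constructor
  · unfold Matrix.IsHermitian
    rw [Matrix.conjTranspose_smul, h.1.eq]
    norm_num
  · have h2 : (0 : ℂ) ≤ (2⁻¹ : ℂ) := by
      rw [Complex.le_def]
      norm_num
    exact (h.smul h2).2

lemma Phi_pos (x : Matrix (Fin 2) (Fin 2) ℂ) (hx : x.PosSemidef) : (Phi x).PosSemidef := by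
  have : Phi x = (2⁻¹ : ℂ) • (Amat * x * Amatᴴ + Bmat * xᵀ * Bmatᴴ) := rfl
  rw [this]
  exact posSemidef_half ((hx.mul_mul_conjTranspose_same Amat).add
    (hx.transpose.mul_mul_conjTranspose_same Bmat))

theorem exists_ergodic_semigroup_spectrum_not_group :
    ∃ Φ : Matrix (Fin 2) (Fin 2) ℂ →ₗ[ℂ] Matrix (Fin 2) (Fin 2) ℂ,
      (∀ x : Matrix (Fin 2) (Fin 2) ℂ, x.PosSemidef → (Φ x).PosSemidef) ∧
      Φ 1 = 1 ∧
      (∀ x : Matrix (Fin 2) (Fin 2) ℂ,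
        (1 / 2 : ℂ) * Matrix.trace (Φ x) = (1 / 2 : ℂ) * Matrix.trace x) ∧
      (∀ x : Matrix (Fin 2) (Fin 2) ℂ, Φ x = x →
        ∃ θ : ℂ, x = θ • (1 : Matrix (Fin 2) (Fin 2) ℂ)) ∧
      ¬ (∀ a ∈ {lam : ℂ | ‖lam‖ = 1 ∧ ∃ x ≠ 0, Φ x = lam • x},
         ∀ b ∈ {lam : ℂ | ‖lam‖ = 1 ∧ ∃ x ≠ 0, Φ x = lam • x},
           a * b ∈ {lam : ℂ | ‖lam‖ = 1 ∧ ∃ x ≠ 0, Φ x = lam • x}) := by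
  refine ⟨Phi, Phi_pos, ?_, ?_, ?_, ?_⟩
  · rw [Phi_apply]
    ext i j
    fin_cases i <;> fin_cases j <;> simp [Matrix.one_apply]
  · intro x
    rw [Phi_apply]
    simp [Matrix.trace_fin_two]
    try ring
  · intro x hx
    rw [Phi_apply] at hx
    have h00 := congr_fun (congr_fun hx 0) 0
    have h01 := congr_fun (congr_fun hx 0) 1
    have h10 := congr_fun (congr_fun hx 1) 0
    have h11 := congr_fun (congr_fun hx 1) 1
    simp at h00 h01 h10 h11
    refine ⟨x 0 0, ?_⟩
    have hb : x 0 1 = 0 := by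
      have : (1 + Complex.I) * x 0 1 = 0 := by linear_combination -h01
      rcases mul_eq_zero.mp this with h | h
      · exfalso
        have := congrArg Complex.im h
        simp at this
      · exact h
    have hc : x 1 0 = 0 := by
      have : (Complex.I - 1) * x 1 0 = 0 := by linear_combination h10
      rcases mul_eq_zero.mp this with h | h
      · exfalso
        have := congrArg Complex.im h
        simp at this
      · exact h
    have hd : x 1 1 = x 0 0 := by linear_combination 2 * h00
    ext i j
    fin_cases i <;> fin_cases j <;> simp [Matrix.one_apply, hb, hc, hd]
  · intro hgrp
    have hI : Complex.I ∈ {lam : ℂ | ‖lam‖ = 1 ∧ ∃ x ≠ 0, Phi x = lam • x} := by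
      refine ⟨Complex.norm_I, !![0,0;1,0], ?_, ?_⟩
      · intro h
        have := congr_fun (congr_fun h 1) 0
        simp at this
      · rw [Phi_apply]
        ext i j
        fin_cases i <;> fin_cases j <;> simp
    have hmem := hgrp _ hI _ hI
    obtain ⟨-, x, hx0, hx⟩ := hmem
    rw [Complex.I_mul_I, Phi_apply] at hx
    have h00 := congr_fun (congr_fun hx 0) 0
    have h01 := congr_fun (congr_fun hx 0) 1
    have h10 := congr_fun (congr_fun hx 1) 0
    have h11 := congr_fun (congr_fun hx 1) 1
    simp at h00 h01 h10 h11
    apply hx0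
    have hb : x 0 1 = 0 := by
      have : (1 - Complex.I) * x 0 1 = 0 := by linear_combination -h01
      rcases mul_eq_zero.mp this with h | h
      · exfalso
        have := congrArg Complex.im h
        simp at this
      · exact h
    have hc : x 1 0 = 0 := by
      have : (Complex.I + 1) * x 1 0 = 0 := by linear_combination h10
      rcases mul_eq_zero.mp this with h | h
      · exfalso
        have := congrArg Complex.im h
        simp at this
      · exact h
    have ha : x 0 0 = 0 := by linear_combination (3*h00 - h11) / 4
    have hd : x 1 1 = 0 := by linear_combination (3*h11 - h00) / 4
    ext i j
    fin_cases i <;> fin_cases j <;> simp [ha, hb, hc, hd]
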